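/- arXiv:2110.07866 — 3 statements merged into one kernel-verified Lean document; each statement's English description precedes it below -/
import Mathlib

section
/- Let 1 < p_i, p_j < +∞, let ω_i, ω_j > 0, let F ⊆ ℝ^d be a polytope, and let a, c ∈ ℝ^d with a ∉ F and c ∉ F. Suppose b = (b_1,…,b_d) minimizes the function y ↦ ω_i‖y − a‖_{p_i} + ω_j‖c − y‖_{p_j} over y ∈ F, and let F_b be the face of F such that b ∈ relint(F_b). Then for all points f = (f_1,…,f_d) and g = (g_1,…,g_d) in F_b: ω_i Σ_{k=1}^d (|b_k − a_k|/‖b − a‖_{p_i})^{p_i−1} sign(b_k − a_k)(f_k − g_k) = ω_j Σ_{k=1}^d (|c_k − b_k|/‖c − b‖_{p_j})^{p_j−1} sign(c_k − b_k)(f_k − g_k). -/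
open scoped BigOperators

noncomputable def lpnorm {d : ℕ} (p : ℝ) (x : Fin d → ℝ) : ℝ :=
  (∑ k, |x k| ^ p) ^ (1 / p)

lemma lpnorm_sum_pos {d : ℕ} {p : ℝ} {x : Fin d → ℝ} (hx : x ≠ 0) :
    0 < ∑ k, |x k| ^ p := by
  obtain ⟨k, hk⟩ := Function.ne_iff.1 hx
  exact Finset.sum_pos' (fun i _ => Real.rpow_nonneg (abs_nonneg _) p)
    ⟨k, Finset.mem_univ k, Real.rpow_pos_of_pos (abs_pos.2 hk) p⟩

lemma lpnorm_line_hasDerivAt {d : ℕ} {p : ℝ} (hp : 1 < p) {x : Fin d → ℝ} (hx : x ≠ 0)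
    (v : Fin d → ℝ) :
    HasDerivAt (fun t : ℝ => lpnorm p (fun k => x k + t * v k))
      (∑ k, (|x k| / lpnorm p x) ^ (p - 1) * Real.sign (x k) * v k) 0 := by
  have hp0 : (0:ℝ) < p := lt_trans one_pos hp
  have hs0pos : 0 < ∑ k, |x k| ^ p := lpnorm_sum_pos hx
  set s0 : ℝ := ∑ k, |x k| ^ p with hs0
  have hsum : HasDerivAt (fun t : ℝ => ∑ k, |x k + t * v k| ^ p)
      (∑ k, p * |x k| ^ (p - 2) * x k * v k) 0 := by
    apply HasDerivAt.fun_sum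
    intro k _
    have h1 : HasDerivAt (fun t : ℝ => x k + t * v k) (v k) 0 := by
      simpa using ((hasDerivAt_id (0:ℝ)).mul_const (v k)).const_add (x k)
    have h2 : HasDerivAt (fun y : ℝ => |y| ^ p) (p * |x k| ^ (p-2) * x k) (x k + 0 * v k) := by
      have e : x k + 0 * v k = x k := by ring
      rw [e]; exact hasDerivAt_abs_rpow (x k) hp
    exact (h2.comp 0 h1).congr_deriv (g' := p * |x k| ^ (p - 2) * x k * v k) (by ring)
  have h2 : HasDerivAt (fun u : ℝ => u ^ (1/p)) ((1/p) * s0 ^ (1/p - 1))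
      (∑ k, |x k + (0:ℝ) * v k| ^ p) := by
    have e : (∑ k, |x k + (0:ℝ) * v k| ^ p) = s0 := by simp [hs0]
    rw [e]; exact Real.hasDerivAt_rpow_const (Or.inl hs0pos.ne')
  have hcomp := h2.comp 0 hsum
  have hfun : ((fun u : ℝ => u ^ (1/p)) ∘ (fun t : ℝ => ∑ k, |x k + t * v k| ^ p))
      = fun t : ℝ => lpnorm p (fun k => x k + t * v k) := by
    funext t; simp [Function.comp, lpnorm]
  rw [hfun] at hcomp
  refine hcomp.congr_deriv (Eq.symm ?_)
  rw [Finset.mul_sum]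
  apply Finset.sum_congr rfl
  intro k _
  rcases eq_or_ne (x k) 0 with h0 | h0
  · simp [h0, Real.sign_zero]
  · have habs : 0 < |x k| := abs_pos.2 h0
    have hsgn : |x k| ^ (p-2) * x k = |x k| ^ (p-1) * Real.sign (x k) := by
      rcases h0.lt_or_gt with hneg | hpos
      · have e : (-x k) ^ (p-1) = (-x k)^(p-2) * (-x k) := by
          rw [show p-1 = (p-2)+1 by ring, Real.rpow_add_one (neg_ne_zero.2 h0)]
        rw [abs_of_neg hneg, Real.sign_of_neg hneg, e]; ring
      · have e : (x k) ^ (p-1) = (x k)^(p-2) * (x k) := by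
          rw [show p-1 = (p-2)+1 by ring, Real.rpow_add_one h0]
        rw [abs_of_pos hpos, Real.sign_of_pos hpos, e]; ring
    have hN : lpnorm p x = s0 ^ (1/p) := rfl
    have hNpos : 0 < lpnorm p x := by rw [hN]; exact Real.rpow_pos_of_pos hs0pos _
    have hdiv : (|x k| / lpnorm p x) ^ (p - 1)
        = |x k| ^ (p-1) * (s0 ^ ((p-1)/p))⁻¹ := by
      rw [Real.div_rpow (abs_nonneg _) hNpos.le, hN, ← Real.rpow_mul hs0pos.le,
        show (1/p)*(p-1) = (p-1)/p by ring, div_eq_mul_inv]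
    have hinv : s0 ^ (1/p - 1) = (s0 ^ ((p-1)/p))⁻¹ := by
      rw [← Real.rpow_neg hs0pos.le]
      congr 1
      field_simp
      ring
    have hsgn2 : p * |x k| ^ (p-2) * x k = p * (|x k| ^ (p-1) * Real.sign (x k)) := by
      rw [mul_assoc, hsgn]
    rw [hdiv, hinv, hsgn2]
    field_simp


/-- Local optimality criterion for gate points. -/
theorem stmt_1 {d : ℕ} (pi pj : ℝ) (hpi : 1 < pi) (hpj : 1 < pj)
    (ωi ωj : ℝ) (hωi : 0 < ωi) (hωj : 0 < ωj)
    (S : Finset (Fin d → ℝ)) (F : Set (Fin d → ℝ))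
    (hF : F = convexHull ℝ (S : Set (Fin d → ℝ)))
    (a c : Fin d → ℝ) (ha : a ∉ F) (hc : c ∉ F)
    (b : Fin d → ℝ) (hbF : b ∈ F)
    (hmin : ∀ y ∈ F, ωi * lpnorm pi (b - a) + ωj * lpnorm pj (c - b) ≤
      ωi * lpnorm pi (y - a) + ωj * lpnorm pj (c - y))
    (Fb : Set (Fin d → ℝ)) (hFbconv : Convex ℝ Fb) (hFbface : IsExtreme ℝ F Fb)
    (hbrel : b ∈ intrinsicInterior ℝ Fb) :
    ∀ f ∈ Fb, ∀ g ∈ Fb,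
      ωi * ∑ k, (|b k - a k| / lpnorm pi (b - a)) ^ (pi - 1) * Real.sign (b k - a k) * (f k - g k)
        = ωj * ∑ k, (|c k - b k| / lpnorm pj (c - b)) ^ (pj - 1) * Real.sign (c k - b k) * (f k - g k) := by
  intro f hf g hg
  set v : Fin d → ℝ := f - g with hv
  have hba : b - a ≠ 0 := sub_ne_zero.2 (fun h => ha (h ▸ hbF))
  have hcb : c - b ≠ 0 := sub_ne_zero.2 (fun h => hc (h ▸ hbF))
  have hbFb : b ∈ Fb := intrinsicInterior_subset hbrel
  -- eventual membership
  obtain ⟨b', hb'int, hb'co⟩ := hbrel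
  have hmemA : ∀ t : ℝ, b + t • v ∈ affineSpan ℝ Fb := by
    intro t
    have hbA : b ∈ affineSpan ℝ Fb := subset_affineSpan ℝ Fb hbFb
    have hfA : f ∈ affineSpan ℝ Fb := subset_affineSpan ℝ Fb hf
    have hgA : g ∈ affineSpan ℝ Fb := subset_affineSpan ℝ Fb hg
    have hd : t • v ∈ (affineSpan ℝ Fb).direction :=
      Submodule.smul_mem _ t (by simpa [hv] using AffineSubspace.vsub_mem_direction hfA hgA)
    have := AffineSubspace.vadd_mem_of_mem_direction hd hbA
    simpa [add_comm] using this
  set γ : ℝ → affineSpan ℝ Fb := fun t => (⟨b + t • v, hmemA t⟩ : affineSpan ℝ Fb) with hγ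
  have hγc : Continuous γ := by
    apply Continuous.subtype_mk
    fun_prop
  have hγ0 : γ 0 = b' := Subtype.ext (by simp [hγ, hb'co])
  have hev : ∀ᶠ t in nhds (0:ℝ), b + t • v ∈ Fb := by
    have hmem : γ ⁻¹' (interior ((↑) ⁻¹' Fb)) ∈ nhds (0:ℝ) :=
      (isOpen_interior.preimage hγc).mem_nhds (by rw [Set.mem_preimage, hγ0]; exact hb'int)
    filter_upwards [hmem] with t ht
    have h3 : γ t ∈ (Subtype.val ⁻¹' Fb : Set (affineSpan ℝ Fb)) := interior_subset ht
    exact h3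
  -- local min
  set Φ : ℝ → ℝ := fun t => ωi * lpnorm pi ((b + t • v) - a) + ωj * lpnorm pj (c - (b + t • v)) with hΦ
  have hmin0 : IsLocalMin Φ 0 := by
    filter_upwards [hev] with t ht
    have hFmem : b + t • v ∈ F := hFbface.1 ht
    simpa [hΦ] using hmin _ hFmem
  -- derivative
  have hfun1 : (fun t : ℝ => lpnorm pi (fun k => (b-a) k + t * v k))
      = fun t : ℝ => lpnorm pi ((b + t • v) - a) := by
    funext t; congr 1; funext k
    simp [Pi.sub_apply, Pi.add_apply, Pi.smul_apply, smul_eq_mul]; ring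
  have hfun2 : (fun t : ℝ => lpnorm pj (fun k => (c-b) k + t * (-v) k))
      = fun t : ℝ => lpnorm pj (c - (b + t • v)) := by
    funext t; congr 1; funext k
    simp [Pi.sub_apply, Pi.add_apply, Pi.smul_apply, Pi.neg_apply, smul_eq_mul]; ring
  have h1 := lpnorm_line_hasDerivAt hpi hba v
  have h2 := lpnorm_line_hasDerivAt hpj hcb (-v)
  rw [hfun1] at h1
  rw [hfun2] at h2
  have hΦ' : HasDerivAt Φ
      (ωi * (∑ k, (|(b-a) k| / lpnorm pi (b-a)) ^ (pi - 1) * Real.sign ((b-a) k) * v k)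
       + ωj * (∑ k, (|(c-b) k| / lpnorm pj (c-b)) ^ (pj - 1) * Real.sign ((c-b) k) * (-v) k)) 0 :=
    (h1.const_mul ωi).add (h2.const_mul ωj)
  have hzero := hmin0.hasDerivAt_eq_zero hΦ'
  have hneg : (∑ k, (|(c-b) k| / lpnorm pj (c-b)) ^ (pj - 1) * Real.sign ((c-b) k) * (-v) k)
      = -(∑ k, (|(c-b) k| / lpnorm pj (c-b)) ^ (pj - 1) * Real.sign ((c-b) k) * v k) := by
    rw [← Finset.sum_neg_distrib]
    apply Finset.sum_congr rfl
    intro k _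
    simp [mul_neg]
  rw [hneg] at hzero
  have hv' : ∀ k, v k = f k - g k := fun k => rfl
  simp only [hv, Pi.sub_apply] at hzero ⊢
  linarith [hzero]
end

section
/- (Snell's law.) Let α ∈ ℝ² be nonzero and β ∈ ℝ, and set F = {x ∈ ℝ² : α·x = β}. Let ω_s, ω_t > 0, let a ∈ ℝ² with α·a < β and c ∈ ℝ² with α·c > β, and suppose b minimizes y ↦ ω_s‖y − a‖₂ + ω_t‖c − y‖₂ over y ∈ F. Then for every nonzero vector v ∈ ℝ² orthogonal to L(F) (equivalently, v is a nonzero scalar multiple of α): ω_s sin θ_s = ω_t sin θ_t, where θ_s ∈ [0,π] is the angle between b − a and v and θ_t ∈ [0,π] is the angle between c − b and v. -/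
open scoped RealInnerProductSpace

-- helper: derivative of t ↦ ‖x + t • u‖ at 0
lemma helper_deriv {E : Type*} [NormedAddCommGroup E] [InnerProductSpace ℝ E]
    (x u : E) (hx : x ≠ 0) :
    HasDerivAt (fun t : ℝ => ‖x + t • u‖) (⟪x, u⟫ / ‖x‖) 0 := by
  have hq : HasDerivAt (fun t : ℝ => ‖x + t • u‖ ^ 2) (2 * ⟪x, u⟫) 0 := by
    have h : (fun t : ℝ => ‖x + t • u‖ ^ 2)
        = fun t => ‖x‖ ^ 2 + 2 * ⟪x, u⟫ * t + ‖u‖ ^ 2 * t ^ 2 := by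
      funext t
      rw [norm_add_sq_real]
      rw [inner_smul_right, norm_smul]
      simp [mul_pow, sq_abs]
      ring
    rw [h]
    have h1 : HasDerivAt (fun t : ℝ => 2 * ⟪x, u⟫ * t) (2 * ⟪x, u⟫) 0 := by
      simpa using (hasDerivAt_id (0:ℝ)).const_mul (2 * ⟪x, u⟫)
    have h2 : HasDerivAt (fun t : ℝ => ‖u‖ ^ 2 * t ^ 2) 0 0 := by
      simpa using (hasDerivAt_pow 2 (0:ℝ)).const_mul (‖u‖ ^ 2)
    have h3 := ((hasDerivAt_const (0:ℝ) (‖x‖ ^ 2)).add h1).add h2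
    simp only [zero_add, add_zero] at h3
    exact h3
  have hne : ‖x + (0:ℝ) • u‖ ^ 2 ≠ 0 := by
    simp [norm_eq_zero, hx]
  have hcomp := (Real.hasDerivAt_sqrt (by simpa using hne)).comp 0 hq
  have heq : (Real.sqrt ∘ fun t : ℝ => ‖x + t • u‖ ^ 2) = fun t : ℝ => ‖x + t • u‖ := by
    funext t; simp [Function.comp, Real.sqrt_sq (norm_nonneg _)]
  rw [heq] at hcomp
  refine hcomp.congr_deriv ?_
  rw [Real.sqrt_sq (norm_nonneg _), zero_smul, add_zero]
  field_simp

/-- Snell's law. -/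
theorem stmt_2 (α : EuclideanSpace ℝ (Fin 2)) (hα : α ≠ 0) (β : ℝ)
    (F : Set (EuclideanSpace ℝ (Fin 2))) (hF : F = {x | ⟪α, x⟫ = β})
    (ωs ωt : ℝ) (hωs : 0 < ωs) (hωt : 0 < ωt)
    (a c : EuclideanSpace ℝ (Fin 2)) (ha : ⟪α, a⟫ < β) (hc : β < ⟪α, c⟫)
    (b : EuclideanSpace ℝ (Fin 2)) (hbF : b ∈ F)
    (hmin : ∀ y ∈ F, ωs * ‖b - a‖ + ωt * ‖c - b‖ ≤ ωs * ‖y - a‖ + ωt * ‖c - y‖)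
    (v : EuclideanSpace ℝ (Fin 2)) (hv : v ≠ 0)
    (hvperp : ∀ x ∈ F, ∀ x' ∈ F, ⟪v, x - x'⟫ = 0) :
    ωs * Real.sin (InnerProductGeometry.angle (b - a) v)
      = ωt * Real.sin (InnerProductGeometry.angle (c - b) v) := by
  haveI : Fact (Module.finrank ℝ (EuclideanSpace ℝ (Fin 2)) = 2) :=
    ⟨finrank_euclideanSpace_fin⟩
  set o : Orientation ℝ (EuclideanSpace ℝ (Fin 2)) (Fin 2) :=
    (EuclideanSpace.basisFun (Fin 2) ℝ).toBasis.orientation with ho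
  set u : EuclideanSpace ℝ (Fin 2) := o.rightAngleRotation v with hu
  -- b ∈ F means inner α b = β
  have hb : ⟪α, b⟫ = β := by rw [hF] at hbF; exact hbF
  -- J α is in direction of F
  have hJα : b + o.rightAngleRotation α ∈ F := by
    rw [hF]
    simp only [Set.mem_setOf_eq, inner_add_right, hb, o.inner_rightAngleRotation_right α α,
      Orientation.areaForm_apply_self]
    ring
  have hvJα : ⟪v, o.rightAngleRotation α⟫ = 0 := by
    have := hvperp _ hJα b hbF
    simpa using this
  -- hence ⟪α, u⟫ = 0
  have hαu : ⟪α, u⟫ = 0 := by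
    rw [hu, o.inner_rightAngleRotation_right]
    have h1 : ⟪v, o.rightAngleRotation α⟫ = -o.areaForm v α := o.inner_rightAngleRotation_right v α
    rw [h1] at hvJα
    have : o.areaForm v α = 0 := by linarith
    rw [o.areaForm_swap] at this
    linarith
  -- b + t u ∈ F
  have hmem : ∀ t : ℝ, b + t • u ∈ F := by
    intro t
    rw [hF]
    simp only [Set.mem_setOf_eq, inner_add_right, inner_smul_right, hb, hαu]
    ring
  -- b ≠ a and c ≠ b
  have hba : b - a ≠ 0 := by
    intro h
    have : ⟪α, b - a⟫ = 0 := by rw [h]; simp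
    rw [inner_sub_right, hb] at this
    linarith
  have hcb : c - b ≠ 0 := by
    intro h
    have : ⟪α, c - b⟫ = 0 := by rw [h]; simp
    rw [inner_sub_right, hb] at this
    linarith
  have hnba : (0:ℝ) < ‖b - a‖ := norm_pos_iff.mpr hba
  have hncb : (0:ℝ) < ‖c - b‖ := norm_pos_iff.mpr hcb
  have hnv : (0:ℝ) < ‖v‖ := norm_pos_iff.mpr hv
  -- stationarity
  have hd1 := (helper_deriv (b - a) u hba).const_mul ωs
  have hd2 := (helper_deriv (c - b) (-u) hcb).const_mul ωt
  have hf : HasDerivAt (fun t : ℝ => ωs * ‖(b - a) + t • u‖ + ωt * ‖(c - b) + t • (-u)‖)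
      (ωs * (⟪b - a, u⟫ / ‖b - a‖) + ωt * (⟪c - b, -u⟫ / ‖c - b‖)) 0 := hd1.add hd2
  have hlm : IsLocalMin (fun t : ℝ => ωs * ‖(b - a) + t • u‖ + ωt * ‖(c - b) + t • (-u)‖) 0 := by
    apply Filter.Eventually.of_forall
    intro t
    have := hmin (b + t • u) (hmem t)
    have e1 : b + t • u - a = (b - a) + t • u := by abel
    have e2 : c - (b + t • u) = (c - b) + t • (-u) := by
      rw [smul_neg]; abel
    rw [e1, e2] at this
    simpa using this
  have hstat := hlm.hasDerivAt_eq_zero hf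
  rw [inner_neg_right] at hstat
  rw [neg_div] at hstat
  have hkey : ωs * (⟪b - a, u⟫ / ‖b - a‖) = ωt * (⟪c - b, u⟫ / ‖c - b‖) := by linarith
  -- sine formula
  have hsin : ∀ w : EuclideanSpace ℝ (Fin 2), w ≠ 0 →
      Real.sin (InnerProductGeometry.angle w v) = |⟪w, u⟫| / (‖w‖ * ‖v‖) := by
    intro w hw
    have hnw : (0:ℝ) < ‖w‖ := norm_pos_iff.mpr hw
    have hpyth : ⟪v, w⟫ ^ 2 + o.areaForm v w ^ 2 = ‖v‖ ^ 2 * ‖w‖ ^ 2 :=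
      o.inner_sq_add_areaForm_sq v w
    have hω : o.areaForm v w = ⟪u, w⟫ := (o.inner_rightAngleRotation_left v w).symm
    rw [InnerProductGeometry.angle, Real.sin_arccos]
    have h1 : 1 - (⟪w, v⟫ / (‖w‖ * ‖v‖)) ^ 2 = (⟪w, u⟫ / (‖w‖ * ‖v‖)) ^ 2 := by
      rw [hω] at hpyth
      have h2 : ⟪w, v⟫ = ⟪v, w⟫ := real_inner_comm v w
      have h3 : ⟪w, u⟫ = ⟪u, w⟫ := real_inner_comm u w
      rw [h2, h3, div_pow, div_pow, show (‖w‖ * ‖v‖) ^ 2 = ‖v‖ ^ 2 * ‖w‖ ^ 2 by ring,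
        eq_div_iff (by positivity), sub_mul, one_mul,
        div_mul_cancel₀ _ (by positivity : ‖v‖ ^ 2 * ‖w‖ ^ 2 ≠ 0)]
      linarith [hpyth]
    rw [h1, Real.sqrt_sq_eq_abs, abs_div, abs_of_pos (by positivity : (0:ℝ) < ‖w‖ * ‖v‖)]
  rw [hsin (b - a) hba, hsin (c - b) hcb]
  have habs : ωs * (|⟪b - a, u⟫| / ‖b - a‖) = ωt * (|⟪c - b, u⟫| / ‖c - b‖) := by
    have h1 : |ωs * (⟪b - a, u⟫ / ‖b - a‖)| = |ωt * (⟪c - b, u⟫ / ‖c - b‖)| := by rw [hkey]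
    rw [abs_mul, abs_mul, abs_div, abs_div, abs_of_pos hωs, abs_of_pos hωt,
      abs_of_pos hnba, abs_of_pos hncb] at h1
    exact h1
  linear_combination habs / ‖v‖
end

section
/- (Generalized Snell's law, cosine form.) Let 1 < p_i, p_j < +∞, let ω_i, ω_j > 0, let F ⊆ ℝ^d be a polytope, and let a, c ∈ ℝ^d with a ∉ F and c ∉ F. Suppose b minimizes y ↦ ω_i‖y − a‖_{p_i} + ω_j‖c − y‖_{p_j} over y ∈ F, and let F_b be the face of F such that b ∈ relint(F_b). Then for every nonzero vector v ∈ L(aff(F_b)): ω_i ‖v‖_{p_i} cos φ_{p_i°}((b − a)°, v) = ω_j ‖v‖_{p_j} cos φ_{p_j°}((c − b)°, v), where the polar vectors are taken with respect to p_i and p_j respectively; equivalently, ω_i ‖v‖_{p_i} cos φ_{p_i}(v, (b − a)°) = ω_j ‖v‖_{p_j} cos φ_{p_j}(v, (c − b)°). -/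
open scoped BigOperators

/-- The polar vector of `v` with respect to the ℓ_p norm. -/
noncomputable def polarVec {d : ℕ} (p : ℝ) (v : Fin d → ℝ) : Fin d → ℝ :=
  if v = 0 then 0
  else fun k => (|v k| / lpnorm p v) ^ (p - 1) * Real.sign (v k) * lpnorm p v

/-- The ℓ_p-angle between two vectors: the number in [0,π] whose cosine is
`(v·w)/(‖v‖_p ‖w‖_{p°})`. -/
noncomputable def lpAngle {d : ℕ} (p : ℝ) (v w : Fin d → ℝ) : ℝ :=
  Real.arccos ((∑ k, v k * w k) / (lpnorm p v * lpnorm (p / (p - 1)) w))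

lemma sum_abs_rpow_pos {d : ℕ} {p : ℝ} (hp : 0 < p) {x : Fin d → ℝ} (hx : x ≠ 0) :
    0 < ∑ k, |x k| ^ p := by
  obtain ⟨k, hk⟩ := Function.ne_iff.1 hx
  apply Finset.sum_pos' (fun i _ => Real.rpow_nonneg (abs_nonneg _) _)
  exact ⟨k, Finset.mem_univ k, Real.rpow_pos_of_pos (abs_pos.2 hk) p⟩

lemma lpnorm_pos {d : ℕ} {p : ℝ} (hp : 0 < p) {x : Fin d → ℝ} (hx : x ≠ 0) :
    0 < lpnorm p x :=
  Real.rpow_pos_of_pos (sum_abs_rpow_pos hp hx) _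

lemma lpnorm_rpow {d : ℕ} {p : ℝ} (hp : 0 < p) (x : Fin d → ℝ) :
    lpnorm p x ^ p = ∑ k, |x k| ^ p := by
  rw [lpnorm, ← Real.rpow_mul (Finset.sum_nonneg fun i _ => Real.rpow_nonneg (abs_nonneg _) _),
    one_div, inv_mul_cancel₀ hp.ne', Real.rpow_one]

lemma polar_lpnorm {d : ℕ} {p : ℝ} (hp : 1 < p) {x : Fin d → ℝ} (hx : x ≠ 0) :
    lpnorm (p / (p - 1)) (polarVec p x) = lpnorm p x := by
  set q : ℝ := p / (p - 1) with hq
  have hp0 : (0:ℝ) < p := by linarith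
  have hp1 : (0:ℝ) < p - 1 := by linarith
  have hq0 : 0 < q := div_pos hp0 hp1
  have hN := lpnorm_pos hp0 hx
  set N := lpnorm p x with hNdef
  have hpq : (p - 1) * q = p := by rw [hq]; field_simp
  have habs : ∀ k, |polarVec p x k| ^ q = |x k| ^ p * N ^ (q - p) := by
    intro k
    rw [polarVec, if_neg hx]
    rcases eq_or_ne (x k) 0 with h0 | h0
    · simp only [h0, abs_zero, Real.sign_zero, mul_zero, zero_mul, abs_zero]
      rw [Real.zero_rpow (ne_of_gt hq0), Real.zero_rpow (ne_of_gt hp0), zero_mul]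
    · have hsign : |Real.sign (x k)| = 1 := by
        rcases lt_or_gt_of_ne h0 with h | h
        · rw [Real.sign_of_neg h]; simp
        · rw [Real.sign_of_pos h]; simp
      rw [abs_mul, abs_mul, hsign, mul_one, abs_of_nonneg (le_of_lt hN),
        abs_of_nonneg (Real.rpow_nonneg (by positivity) _)]
      rw [Real.mul_rpow (Real.rpow_nonneg (by positivity) _) (le_of_lt hN),
        ← Real.rpow_mul (by positivity : (0:ℝ) ≤ |x k| / N), hpq,
        Real.div_rpow (abs_nonneg _) hN.le, Real.rpow_sub hN]
      ring
  have hsum : ∑ k, |polarVec p x k| ^ q = N ^ q := by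
    rw [Finset.sum_congr rfl fun k _ => habs k, ← Finset.sum_mul, ← lpnorm_rpow hp0,
      ← Real.rpow_add hN]
    congr 1; ring
  rw [lpnorm, hsum, ← Real.rpow_mul hN.le, mul_one_div, div_self (ne_of_gt hq0), Real.rpow_one]

lemma polar_dot {d : ℕ} {p : ℝ} (hp : 1 < p) {x : Fin d → ℝ} (hx : x ≠ 0) (v : Fin d → ℝ) :
    ∑ k, polarVec p x k * v k
      = lpnorm p x ^ (2 - p) * ∑ k, |x k| ^ (p - 1) * Real.sign (x k) * v k := by
  have hp0 : (0:ℝ) < p := by linarith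
  have hN := lpnorm_pos hp0 hx
  rw [Finset.mul_sum]
  apply Finset.sum_congr rfl
  intro k _
  rw [polarVec, if_neg hx]
  have h2 : lpnorm p x ^ (2 - p) * lpnorm p x ^ (p - 1) = lpnorm p x := by
    rw [← Real.rpow_add hN]; norm_num
  have hNp : lpnorm p x ^ (p - 1) ≠ 0 := ne_of_gt (Real.rpow_pos_of_pos hN _)
  rw [Real.div_rpow (abs_nonneg _) hN.le]
  field_simp
  linear_combination (-(|x k| ^ (p - 1) * Real.sign (x k) * v k)) * h2

theorem absrpow_hasDerivAt (p : ℝ) (hp : 1 < p) (s : ℝ) :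
    HasDerivAt (fun t : ℝ => |t| ^ p) (p * |s| ^ (p - 1) * Real.sign s) s := by
  rcases eq_or_ne s 0 with rfl | hs
  · simp only [Real.sign_zero, mul_zero]
    rw [hasDerivAt_iff_tendsto_slope]
    have h1 : Filter.Tendsto (fun t : ℝ => |t| ^ (p - 1)) (nhdsWithin 0 {(0:ℝ)}ᶜ) (nhds 0) := by
      have : Filter.Tendsto (fun t : ℝ => |t| ^ (p - 1)) (nhds 0) (nhds 0) := by
        have hcont : ContinuousAt (fun t : ℝ => |t| ^ (p - 1)) 0 := by
          apply ContinuousAt.rpow_const (continuous_abs.continuousAt)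
          right; linarith
        simpa [Real.zero_rpow (by linarith : p - 1 ≠ 0)] using hcont.tendsto
      exact this.mono_left nhdsWithin_le_nhds
    apply squeeze_zero_norm _ h1
    intro t
    rcases eq_or_ne t 0 with rfl | ht
    · simp [slope_def_field]
      positivity
    · have : slope (fun t : ℝ => |t| ^ p) 0 t = |t| ^ p / t := by
        simp [slope_def_field, div_eq_iff ht]
        rw [Real.zero_rpow (by linarith : p ≠ 0)]
        field_simp
        simp
      rw [this, Real.norm_eq_abs, abs_div, abs_of_nonneg (Real.rpow_nonneg (abs_nonneg t) p)]
      rw [div_le_iff₀ (abs_pos.2 ht), ← Real.rpow_add_one (abs_ne_zero.2 ht), sub_add_cancel]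
  · have h1 : HasDerivAt (fun t : ℝ => |t|) (Real.sign s) s := by
      have := hasDerivAt_abs hs
      convert this using 1
      rcases lt_or_gt_of_ne hs with h | h
      · simp [Real.sign_of_neg h, h]
      · simp [Real.sign_of_pos h, h]
    have := h1.rpow_const (p := p) (Or.inl (by simpa using hs))
    convert this using 1
    ring

lemma lp_hasDerivAt {d : ℕ} {p : ℝ} (hp : 1 < p) {x : Fin d → ℝ} (hx : x ≠ 0) (v : Fin d → ℝ) :
    HasDerivAt (fun t : ℝ => lpnorm p (x + t • v))
      (lpnorm p x ^ (1 - p) * ∑ k, |x k| ^ (p - 1) * Real.sign (x k) * v k) 0 := by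
  have hp0 : (0:ℝ) < p := by linarith
  have hS0 : 0 < ∑ k, |x k| ^ p := sum_abs_rpow_pos hp0 hx
  have hk : ∀ k : Fin d, HasDerivAt (fun t : ℝ => |x k + t * v k| ^ p)
      (p * |x k| ^ (p - 1) * Real.sign (x k) * v k) 0 := by
    intro k
    have haff : HasDerivAt (fun t : ℝ => x k + t * v k) (v k) 0 := by
      simpa using ((hasDerivAt_id (0:ℝ)).mul_const (v k)).const_add (x k)
    have := (absrpow_hasDerivAt p hp (x k + 0 * v k)).comp 0 haff
    simp only [zero_mul, add_zero] at this
    exact this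
  have hsum : HasDerivAt (fun t : ℝ => ∑ k, |x k + t * v k| ^ p)
      (∑ k, p * |x k| ^ (p - 1) * Real.sign (x k) * v k) 0 :=
    HasDerivAt.fun_sum fun k _ => hk k
  have hne : (∑ k, |x k + (0:ℝ) * v k| ^ p) ≠ 0 := by
    simpa using ne_of_gt hS0
  have hrpow := hsum.rpow_const (p := 1 / p) (Or.inl hne)
  have hNp : lpnorm p x ^ (1 - p) = (∑ k, |x k| ^ p) ^ (1 / p - 1) := by
    rw [lpnorm, ← Real.rpow_mul hS0.le]
    congr 1
    field_simp
  convert hrpow using 1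
  · rfl
  simp only [zero_mul, add_zero]
  have hfac : ∑ k, p * |x k| ^ (p - 1) * Real.sign (x k) * v k
      = p * ∑ k, |x k| ^ (p - 1) * Real.sign (x k) * v k := by
    rw [Finset.mul_sum]
    exact Finset.sum_congr rfl fun k _ => by ring
  rw [hNp, hfac]
  field_simp

lemma holder_abs {d : ℕ} {p q : ℝ} (hpq : q.HolderConjugate p) (u w : Fin d → ℝ) :
    |∑ k, u k * w k| ≤ lpnorm q u * lpnorm p w := by
  have h1 := Real.inner_le_Lp_mul_Lq (Finset.univ) u w hpq
  have h2 := Real.inner_le_Lp_mul_Lq (Finset.univ) (-u) w hpq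
  simp only [Pi.neg_apply, abs_neg, neg_mul] at h2
  rw [Finset.sum_neg_distrib] at h2
  rw [abs_le]
  constructor
  · rw [lpnorm, lpnorm]; linarith
  · rw [lpnorm, lpnorm]; linarith

lemma key_cos {d : ℕ} {p : ℝ} (hp : 1 < p) {x v : Fin d → ℝ} (hx : x ≠ 0) (hv : v ≠ 0) :
    lpnorm p v * Real.cos (lpAngle (p / (p - 1)) (polarVec p x) v)
      = lpnorm p x ^ (1 - p) * ∑ k, |x k| ^ (p - 1) * Real.sign (x k) * v k ∧
    lpnorm p v * Real.cos (lpAngle p v (polarVec p x))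
      = lpnorm p x ^ (1 - p) * ∑ k, |x k| ^ (p - 1) * Real.sign (x k) * v k := by
  have hp0 : (0:ℝ) < p := by linarith
  have hp1 : (0:ℝ) < p - 1 := by linarith
  set q : ℝ := p / (p - 1) with hq
  have hq1 : 1 < q := by rw [hq, lt_div_iff₀ hp1]; linarith
  have hqp : q / (q - 1) = p := by rw [hq]; field_simp; ring
  have hconj : q.HolderConjugate p := Real.holderConjugate_iff.mpr ⟨hq1, by rw [hq]; field_simp; ring⟩
  have hNx := lpnorm_pos hp0 hx
  have hNv := lpnorm_pos hp0 hv
  set Nx := lpnorm p x with hNxd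
  set Nv := lpnorm p v with hNvd
  set A := ∑ k, |x k| ^ (p - 1) * Real.sign (x k) * v k with hA
  have hdot : ∑ k, polarVec p x k * v k = Nx ^ (2 - p) * A := polar_dot hp hx v
  have hdot' : ∑ k, v k * polarVec p x k = Nx ^ (2 - p) * A := by
    rw [← hdot]; exact Finset.sum_congr rfl fun k _ => mul_comm _ _
  have hun : lpnorm q (polarVec p x) = Nx := polar_lpnorm hp hx
  have hsplit : Nx ^ (2 - p) = Nx ^ (1 - p) * Nx := by
    have := Real.rpow_add_one (ne_of_gt hNx) (1 - p)
    rw [show (1 - p) + 1 = 2 - p by ring] at this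
    exact this
  have hH : Nx ^ (2 - p) * |A| ≤ Nx * Nv := by
    have := holder_abs hconj (polarVec p x) v
    rw [hun, hdot, abs_mul, abs_of_nonneg (Real.rpow_nonneg hNx.le _)] at this
    exact this
  have hbound : |Nx ^ (1 - p) * A| ≤ Nv := by
    rw [abs_mul, abs_of_nonneg (Real.rpow_nonneg hNx.le _)]
    have h3 : Nx ^ (1 - p) * |A| * Nx = Nx ^ (2 - p) * |A| := by rw [hsplit]; ring
    calc Nx ^ (1 - p) * |A| = Nx ^ (1 - p) * |A| * Nx / Nx := by field_simp
      _ = Nx ^ (2 - p) * |A| / Nx := by rw [h3]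
      _ ≤ Nx * Nv / Nx := by gcongr
      _ = Nv := by field_simp
  have hQ : (Nx ^ (2 - p) * A) / (Nx * Nv) = Nx ^ (1 - p) * A / Nv := by
    rw [hsplit]; field_simp
  have hcos : Real.cos (Real.arccos (Nx ^ (1 - p) * A / Nv)) = Nx ^ (1 - p) * A / Nv := by
    apply Real.cos_arccos
    · rw [le_div_iff₀ hNv, neg_mul]
      have := neg_abs_le (Nx ^ (1 - p) * A)
      nlinarith [abs_nonneg (Nx ^ (1 - p) * A)]
    · rw [div_le_one hNv]
      exact le_trans (le_abs_self _) hbound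
  constructor
  · rw [lpAngle, hqp, hun, hdot, ← hNvd, hQ, hcos]
    field_simp
  · rw [lpAngle, ← hq, hun, hdot', mul_comm Nv Nx, hQ, hcos]
    field_simp

/-- Generalized Snell's law (Snell's-like local optimality criterion for gate points),
cosine form. -/
theorem stmt_8 {d : ℕ} (pi pj : ℝ) (hpi : 1 < pi) (hpj : 1 < pj)
    (ωi ωj : ℝ) (hωi : 0 < ωi) (hωj : 0 < ωj)
    (S : Finset (Fin d → ℝ)) (F : Set (Fin d → ℝ))
    (hF : F = convexHull ℝ (S : Set (Fin d → ℝ)))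
    (a c : Fin d → ℝ) (ha : a ∉ F) (hc : c ∉ F)
    (b : Fin d → ℝ) (hbF : b ∈ F)
    (hmin : ∀ y ∈ F, ωi * lpnorm pi (b - a) + ωj * lpnorm pj (c - b) ≤
      ωi * lpnorm pi (y - a) + ωj * lpnorm pj (c - y))
    (Fb : Set (Fin d → ℝ)) (hFbconv : Convex ℝ Fb) (hFbface : IsExtreme ℝ F Fb)
    (hbrel : b ∈ intrinsicInterior ℝ Fb) :
    ∀ v : Fin d → ℝ, v ≠ 0 →
      (∃ f ∈ (affineSpan ℝ Fb : Set (Fin d → ℝ)),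
        ∃ g ∈ (affineSpan ℝ Fb : Set (Fin d → ℝ)), v = f - g) →
      (ωi * lpnorm pi v * Real.cos (lpAngle (pi / (pi - 1)) (polarVec pi (b - a)) v)
          = ωj * lpnorm pj v * Real.cos (lpAngle (pj / (pj - 1)) (polarVec pj (c - b)) v)) ∧
      (ωi * lpnorm pi v * Real.cos (lpAngle pi v (polarVec pi (b - a)))
          = ωj * lpnorm pj v * Real.cos (lpAngle pj v (polarVec pj (c - b)))) := by
  intro v hv hvspan
  have hba : b - a ≠ 0 := by
    rw [sub_ne_zero]
    intro h
    exact ha (h ▸ hbF)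
  have hcb : c - b ≠ 0 := by
    rw [sub_ne_zero]
    intro h
    exact hc (h ▸ hbF)
  have hbFb : b ∈ Fb := intrinsicInterior_subset hbrel
  obtain ⟨f, hf, g, hg, hvfg⟩ := hvspan
  have hvdir : v ∈ (affineSpan ℝ Fb).direction := by
    rw [hvfg]
    exact AffineSubspace.vsub_mem_direction hf hg
  have hmem : ∀ t : ℝ, b + t • v ∈ affineSpan ℝ Fb := by
    intro t
    have h1 : t • v ∈ (affineSpan ℝ Fb).direction := Submodule.smul_mem _ t hvdir
    have h2 := AffineSubspace.vadd_mem_of_mem_direction h1 (subset_affineSpan ℝ Fb hbFb)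
    simpa [add_comm] using h2
  obtain ⟨y, hy, hyb⟩ := mem_intrinsicInterior.1 hbrel
  set γ : ℝ → (affineSpan ℝ Fb) := fun t => ⟨b + t • v, hmem t⟩ with hγ
  have hγcont : Continuous γ := by
    apply Continuous.subtype_mk
    exact continuous_const.add (continuous_id.smul continuous_const)
  have hγ0 : γ 0 = y := by
    apply Subtype.ext
    simp [hγ, ← hyb]
  have hnbhd : ∀ᶠ t : ℝ in nhds 0, b + t • v ∈ Fb := by
    have hmemn : γ ⁻¹' (interior ((↑) ⁻¹' Fb)) ∈ nhds (0:ℝ) :=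
      hγcont.continuousAt.preimage_mem_nhds (isOpen_interior.mem_nhds (hγ0 ▸ hy))
    filter_upwards [hmemn] with t ht
    have h2 : γ t ∈ (Subtype.val ⁻¹' Fb : Set (affineSpan ℝ Fb)) := interior_subset ht
    exact h2
  -- derivatives
  set Ai := ∑ k, |(b - a) k| ^ (pi - 1) * Real.sign ((b - a) k) * v k with hAi
  set Aj := ∑ k, |(c - b) k| ^ (pj - 1) * Real.sign ((c - b) k) * v k with hAj
  have hDi := lp_hasDerivAt hpi hba v
  have hDj : HasDerivAt (fun t : ℝ => lpnorm pj ((c - b) + t • (-v)))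
      (lpnorm pj (c - b) ^ (1 - pj) * (-Aj)) 0 := by
    have hs : ∑ k, |(c - b) k| ^ (pj - 1) * Real.sign ((c - b) k) * (-v) k = -Aj := by
      rw [hAj, ← Finset.sum_neg_distrib]
      apply Finset.sum_congr rfl
      intro k _
      simp [mul_neg]
    have h := lp_hasDerivAt hpj hcb (-v)
    rw [hs] at h
    exact h
  set φ : ℝ → ℝ := fun t =>
    ωi * lpnorm pi ((b - a) + t • v) + ωj * lpnorm pj ((c - b) + t • (-v)) with hφdef
  have hφ : HasDerivAt φ
      (ωi * (lpnorm pi (b - a) ^ (1 - pi) * Ai)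
        + ωj * (lpnorm pj (c - b) ^ (1 - pj) * (-Aj))) 0 :=
    (hDi.const_mul ωi).add (hDj.const_mul ωj)
  have hlocmin : IsLocalMin φ 0 := by
    filter_upwards [hnbhd] with t ht
    have hFmem : b + t • v ∈ F := hFbface.1 ht
    have hmin' := hmin (b + t • v) hFmem
    have e1 : (b - a) + t • v = (b + t • v) - a := by abel
    have e2 : (c - b) + t • (-v) = c - (b + t • v) := by rw [smul_neg]; abel
    have e3 : (b - a) + (0:ℝ) • v = b - a := by simp
    have e4 : (c - b) + (0:ℝ) • (-v) = c - b := by simp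
    simp only [hφdef, e1, e2, e3, e4]
    exact hmin'
  have h0 := hlocmin.hasDerivAt_eq_zero hφ
  obtain ⟨k1a, k1b⟩ := key_cos hpi hba hv
  obtain ⟨k2a, k2b⟩ := key_cos hpj hcb hv
  rw [← hAi] at k1a k1b
  rw [← hAj] at k2a k2b
  constructor
  · rw [mul_assoc, mul_assoc, k1a, k2a]
    linear_combination h0
  · rw [mul_assoc, mul_assoc, k1b, k2b]
    linear_combination h0
end
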